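/- For all n ≥ 0 and -n ≤ k ≤ n, the second difference identity p_{n+1}(k+1) - 2 p_{n+1}(k) + p_{n+1}(k-1) = 2 p_n(k) holds. -/

import Mathlib

noncomputable def p : ℕ → ℤ → ℤ
  | 0, k => if k = 0 then 1 else 0
  | n + 1, k => ∑ j ∈ Finset.Icc (-(n : ℤ)) (n : ℤ), |j - k| * p n j

/-- Second difference identity: for `-n ≤ k ≤ n`,
`p (n+1) (k+1) - 2 p (n+1) k + p (n+1) (k-1) = 2 p n k`. -/
theorem p_second_difference (n : ℕ) (k : ℤ) (h1 : -(n : ℤ) ≤ k) (h2 : k ≤ (n : ℤ)) :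
    p (n + 1) (k + 1) - 2 * p (n + 1) k + p (n + 1) (k - 1) = 2 * p n k := by
  show (∑ j ∈ Finset.Icc (-(n : ℤ)) (n : ℤ), |j - (k + 1)| * p n j)
      - 2 * (∑ j ∈ Finset.Icc (-(n : ℤ)) (n : ℤ), |j - k| * p n j)
      + (∑ j ∈ Finset.Icc (-(n : ℤ)) (n : ℤ), |j - (k - 1)| * p n j) = 2 * p n k
  rw [Finset.mul_sum, ← Finset.sum_sub_distrib, ← Finset.sum_add_distrib]
  have hmem : k ∈ Finset.Icc (-(n : ℤ)) (n : ℤ) := Finset.mem_Icc.mpr ⟨h1, h2⟩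
  rw [Finset.sum_congr rfl (fun j _ => ?_), Finset.sum_ite_eq' _ k (fun j => 2 * p n j),
    if_pos hmem]
  · rcases lt_trichotomy j k with h | h | h
    · rw [if_neg h.ne, abs_of_nonpos (by omega), abs_of_nonpos (by omega),
        abs_of_nonpos (by omega)]
      ring
    · subst h
      simp
      ring
    · rw [if_neg h.ne', abs_of_nonneg (by omega), abs_of_nonneg (by omega),
        abs_of_nonneg (by omega)]
      ring
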